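/- Let G be a Class 2 simple graph with maximum degree Δ and let F = F_φ(r, s₁:s_p) be a multifan with respect to a critical edge e = rs₁ and a coloring φ ∈ C^Δ(G−e). Then V(F) = {r, s₁, …, s_p} is φ-elementary, i.e., φ̄(u) ∩ φ̄(v) = ∅ for every two distinct vertices u, v ∈ V(F). -/

import Mathlib

/-- `c` is a proper edge coloring of `G` using colors in `{1, …, k}`:
every edge gets a color in `[1,k]`, and distinct edges sharing an endpoint
get distinct colors. -/
def IsEdgeColoring {V : Type*} (G : SimpleGraph V) (k : ℕ) (c : Sym2 V → ℕ) : Prop :=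
  (∀ e ∈ G.edgeSet, 1 ≤ c e ∧ c e ≤ k) ∧
    ∀ e ∈ G.edgeSet, ∀ f ∈ G.edgeSet, e ≠ f → (∃ v, v ∈ e ∧ v ∈ f) → c e ≠ c f

/-- The chromatic index `χ'(G)`: the least `k` admitting a proper edge `k`-coloring. -/
noncomputable def chromIndex {V : Type*} (G : SimpleGraph V) : ℕ :=
  sInf {k | ∃ c, IsEdgeColoring G k c}

/-- An edge `e` of `G` is critical if `χ'(G-e) < χ'(G)`. -/
def IsCriticalEdge {V : Type*} (G : SimpleGraph V) (e : Sym2 V) : Prop :=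
  e ∈ G.edgeSet ∧ chromIndex (G.deleteEdges {e}) < chromIndex G

/-- The set of colors of `[1,k]` missing at `v` under the coloring `c` of `G`. -/
def missingColors {V : Type*} (G : SimpleGraph V) (k : ℕ) (c : Sym2 V → ℕ) (v : V) : Set ℕ :=
  {α | 1 ≤ α ∧ α ≤ k ∧ ∀ e ∈ G.edgeSet, v ∈ e → c e ≠ α}

/-- `G` is `Δ`-critical: `Δ` is the maximum degree of `G`, `χ'(G) = Δ+1`, and every
proper subgraph has chromatic index less than `Δ+1`. -/
def IsDeltaCritical {V : Type*} [Fintype V] (G : SimpleGraph V) [DecidableRel G.Adj]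
    (Δ : ℕ) : Prop :=
  G.maxDegree = Δ ∧ chromIndex G = Δ + 1 ∧
    ∀ H : SimpleGraph V, H ≤ G → H ≠ G → chromIndex H < Δ + 1

/-- A Kierstead path `(v₀, v₀v₁, v₁, …, v_{p-1}v_p, v_p)` with respect to the edge
`v₀v₁` and a `k`-coloring `c` of `G - v₀v₁`, encoded by the list `P = [v₀, …, v_p]`. -/
structure IsKiersteadPath {V : Type*} (G : SimpleGraph V) (k : ℕ) (c : Sym2 V → ℕ)
    (P : List V) : Prop where
  two_le : 2 ≤ P.length
  nodup : P.Nodup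
  adj : ∀ (i : ℕ) (h : i + 1 < P.length), G.Adj (P[i]'(by omega)) (P[i+1]'h)
  color : ∀ (i : ℕ) (h : i + 1 < P.length), 1 ≤ i →
      ∃ (j : ℕ) (_ : j ≤ i),
        c (Sym2.mk (P[i]'(by omega)) (P[i+1]'h)) ∈
          missingColors (G.deleteEdges {Sym2.mk (P[0]'(by omega)) (P[1]'(by omega))}) k c
            (P[j]'(by omega))

/-- A multifan centered at `r` with respect to the edge `r s₁` and a `k`-coloring `c` of
`G - r s₁`, encoded by `r` and the list `sl = [s₁, …, s_p]`. -/
structure IsMultifan {V : Type*} (G : SimpleGraph V) (k : ℕ) (c : Sym2 V → ℕ)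
    (r : V) (sl : List V) : Prop where
  one_le : 1 ≤ sl.length
  nodup : (r :: sl).Nodup
  adj : ∀ (i : ℕ) (h : i < sl.length), G.Adj r (sl[i]'h)
  color : ∀ (i : ℕ) (h : i < sl.length), 1 ≤ i →
      ∃ (j : ℕ) (_ : j < i),
        c (Sym2.mk r (sl[i]'h)) ∈
          missingColors (G.deleteEdges {Sym2.mk r (sl[0]'(by omega))}) k c
            (sl[j]'(by omega))

/-- The subgraph of `G` whose edges are the edges colored `α` or `β` by `c`;
its components are the `(α,β)`-chains. -/
def chainGraph {V : Type*} (G : SimpleGraph V) (c : Sym2 V → ℕ) (α β : ℕ) :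
    SimpleGraph V where
  Adj x y := G.Adj x y ∧ (c (Sym2.mk x y) = α ∨ c (Sym2.mk x y) = β)
  symm := by
    constructor
    intro x y hxy
    refine ⟨hxy.1.symm, ?_⟩
    rw [Sym2.eq_swap]
    exact hxy.2
  loopless := ⟨fun x hx => G.loopless.irrefl x hx.1⟩

/-- `x` and `y` are `(α,β)`-linked with respect to the coloring `c` of `G`:
they belong to the same `(α,β)`-chain. -/
def Linked {V : Type*} (G : SimpleGraph V) (c : Sym2 V → ℕ) (α β : ℕ) (x y : V) : Prop :=
  (chainGraph G c α β).Reachable x y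


set_option linter.unusedSectionVars false
set_option linter.unusedVariables false
namespace MFElem
open SimpleGraph

variable {V : Type*} [DecidableEq V]

lemma missing_def {K : SimpleGraph V} {k δ : ℕ} {c : Sym2 V → ℕ} {v : V} :
    δ ∈ missingColors K k c v ↔ 1 ≤ δ ∧ δ ≤ k ∧ ∀ g ∈ K.edgeSet, v ∈ g → c g ≠ δ :=
  Iff.rfl

lemma chainGraph_adj {K : SimpleGraph V} {c : Sym2 V → ℕ} {α β : ℕ} {x y : V} :
    (chainGraph K c α β).Adj x y ↔ K.Adj x y ∧ (c s(x,y) = α ∨ c s(x,y) = β) := Iff.rfl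

lemma missing_eq {K : SimpleGraph V} {k : ℕ} {c c' : Sym2 V → ℕ} {v : V}
    (h : ∀ g ∈ K.edgeSet, v ∈ g → c' g = c g) :
    missingColors K k c' v = missingColors K k c v := by
  ext δ
  simp only [missingColors, Set.mem_setOf_eq]
  constructor
  · rintro ⟨h1, h2, h3⟩
    exact ⟨h1, h2, fun g hg hv => by rw [← h g hg hv]; exact h3 g hg hv⟩
  · rintro ⟨h1, h2, h3⟩
    exact ⟨h1, h2, fun g hg hv => by rw [h g hg hv]; exact h3 g hg hv⟩

/-! ### Recoloring a single edge -/

def recolor (c : Sym2 V → ℕ) (f : Sym2 V) (δ : ℕ) : Sym2 V → ℕ :=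
  fun g => if g = f then δ else c g

lemma recolor_ne {c : Sym2 V → ℕ} {f g : Sym2 V} {δ : ℕ} (h : g ≠ f) :
    recolor c f δ g = c g := if_neg h

lemma recolor_self {c : Sym2 V → ℕ} {f : Sym2 V} {δ : ℕ} :
    recolor c f δ f = δ := if_pos rfl

lemma recolor_proper {K : SimpleGraph V} {k : ℕ} {c : Sym2 V → ℕ}
    (hcol : IsEdgeColoring K k c) {f : Sym2 V} (hf : f ∈ K.edgeSet) {δ : ℕ}
    (hδ1 : 1 ≤ δ) (hδ2 : δ ≤ k)
    (hmiss : ∀ w ∈ f, ∀ g ∈ K.edgeSet, w ∈ g → c g ≠ δ) :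
    IsEdgeColoring K k (recolor c f δ) := by
  constructor
  · intro g hg
    by_cases hgf : g = f
    · rw [hgf, recolor_self]; exact ⟨hδ1, hδ2⟩
    · rw [recolor_ne hgf]; exact hcol.1 g hg
  · rintro g1 hg1 g2 hg2 hne ⟨v, hv1, hv2⟩
    by_cases h1 : g1 = f <;> by_cases h2 : g2 = f
    · exact absurd (h1.trans h2.symm) hne
    · rw [h1, recolor_self, recolor_ne h2]
      exact fun h => hmiss v (h1 ▸ hv1) g2 hg2 hv2 h.symm
    · rw [h2, recolor_self, recolor_ne h1]
      exact fun h => hmiss v (h2 ▸ hv2) g1 hg1 hv1 h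
    · rw [recolor_ne h1, recolor_ne h2]
      exact hcol.2 g1 hg1 g2 hg2 hne ⟨v, hv1, hv2⟩

lemma recolor_proper_del {K : SimpleGraph V} {k : ℕ} {c : Sym2 V → ℕ}
    {f : Sym2 V} (hf : f ∈ K.edgeSet)
    (hcol : IsEdgeColoring (K.deleteEdges {f}) k c) {δ : ℕ}
    (hδ1 : 1 ≤ δ) (hδ2 : δ ≤ k)
    (hmiss : ∀ w ∈ f, ∀ g ∈ (K.deleteEdges {f}).edgeSet, w ∈ g → c g ≠ δ) :
    IsEdgeColoring K k (recolor c f δ) := by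
  have hmemdel : ∀ g ∈ K.edgeSet, g ≠ f → g ∈ (K.deleteEdges {f}).edgeSet := by
    intro g hg hgf
    rw [edgeSet_deleteEdges]
    exact ⟨hg, by simp [hgf]⟩
  constructor
  · intro g hg
    by_cases hgf : g = f
    · rw [hgf, recolor_self]; exact ⟨hδ1, hδ2⟩
    · rw [recolor_ne hgf]; exact hcol.1 g (hmemdel g hg hgf)
  · rintro g1 hg1 g2 hg2 hne ⟨v, hv1, hv2⟩
    by_cases h1 : g1 = f <;> by_cases h2 : g2 = f
    · exact absurd (h1.trans h2.symm) hne
    · rw [h1, recolor_self, recolor_ne h2]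
      exact fun h => hmiss v (h1 ▸ hv1) g2 (hmemdel g2 hg2 h2) hv2 h.symm
    · rw [h2, recolor_self, recolor_ne h1]
      exact fun h => hmiss v (h2 ▸ hv2) g1 (hmemdel g1 hg1 h1) hv1 h
    · rw [recolor_ne h1, recolor_ne h2]
      exact hcol.2 g1 (hmemdel g1 hg1 h1) g2 (hmemdel g2 hg2 h2) hne ⟨v, hv1, hv2⟩

lemma recolor_missing_other {K : SimpleGraph V} {k : ℕ} {c : Sym2 V → ℕ}
    {f : Sym2 V} {δ : ℕ} {v : V} (hv : v ∉ f) :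
    missingColors K k (recolor c f δ) v = missingColors K k c v :=
  missing_eq (fun g _ hvg => recolor_ne (fun h => hv (h ▸ hvg)))

lemma recolor_old_missing {K : SimpleGraph V} {k : ℕ} {c : Sym2 V → ℕ}
    (hcol : IsEdgeColoring K k c) {f : Sym2 V} (hf : f ∈ K.edgeSet) {δ : ℕ} {u : V}
    (hu : u ∈ f) (hδu : ∀ g ∈ K.edgeSet, u ∈ g → c g ≠ δ) :
    c f ∈ missingColors K k (recolor c f δ) u := by
  refine ⟨(hcol.1 f hf).1, (hcol.1 f hf).2, ?_⟩
  intro g hg hug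
  by_cases hgf : g = f
  · rw [hgf, recolor_self]
    exact fun h => hδu f hf hu h.symm
  · rw [recolor_ne hgf]
    exact hcol.2 g hg f hf hgf ⟨u, hug, hu⟩

/-! ### Swapping colors on a Kempe chain -/

open Classical in
noncomputable def swapColor (c : Sym2 V → ℕ) (α β : ℕ) (C : Set V) : Sym2 V → ℕ :=
  fun g => if (c g = α ∨ c g = β) ∧ (∃ v ∈ g, v ∈ C) then (if c g = α then β else α) else c g

section Swap

variable {K : SimpleGraph V} {k : ℕ} {c : Sym2 V → ℕ} {α β : ℕ} {C : Set V}

/-- `C` is closed under chain adjacency. -/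
def ChainClosed (K : SimpleGraph V) (c : Sym2 V → ℕ) (α β : ℕ) (C : Set V) : Prop :=
  ∀ x y, x ∈ C → K.Adj x y → (c s(x,y) = α ∨ c s(x,y) = β) → y ∈ C

lemma swap_closed (hC : ChainClosed K c α β C) {g : Sym2 V} (hg : g ∈ K.edgeSet)
    (hcolg : c g = α ∨ c g = β) (hex : ∃ v ∈ g, v ∈ C) : ∀ w ∈ g, w ∈ C := by
  induction g using Sym2.ind with
  | _ x y =>
    rw [mem_edgeSet] at hg
    obtain ⟨v, hv, hvC⟩ := hex
    have hxy : x ∈ C → y ∈ C := fun h => hC x y h hg hcolg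
    have hyx : y ∈ C → x ∈ C := by
      intro h
      refine hC y x h hg.symm ?_
      rwa [Sym2.eq_swap]
    intro w hw
    rcases Sym2.mem_iff.mp hw with rfl | rfl <;> rcases Sym2.mem_iff.mp hv with rfl | rfl
    · exact hvC
    · exact hyx hvC
    · exact hxy hvC
    · exact hvC

lemma swap_eq_of_notMem (hC : ChainClosed K c α β C) {g : Sym2 V} (hg : g ∈ K.edgeSet)
    {v : V} (hv : v ∈ g) (hvC : v ∉ C) : swapColor c α β C g = c g := by
  have hcond : ¬((c g = α ∨ c g = β) ∧ ∃ v ∈ g, v ∈ C) :=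
    fun h => hvC (swap_closed hC hg h.1 h.2 v hv)
  simp only [swapColor, if_neg hcond]

lemma swap_missing_eq (hC : ChainClosed K c α β C) {v : V} (hvC : v ∉ C) :
    missingColors K k (swapColor c α β C) v = missingColors K k c v :=
  missing_eq (fun g hg hv => swap_eq_of_notMem hC hg hv hvC)

lemma swap_missing_other {δ : ℕ} (hδα : δ ≠ α) (hδβ : δ ≠ β) (v : V) :
    δ ∈ missingColors K k (swapColor c α β C) v ↔ δ ∈ missingColors K k c v := by
  have key : ∀ g : Sym2 V, (swapColor c α β C g = δ ↔ c g = δ) := by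
    intro g
    unfold swapColor
    split_ifs with h h2
    · rw [h2]
      exact iff_of_false (fun hh => hδβ hh.symm) (fun hh => hδα hh.symm)
    · have hcβ : c g = β := h.1.resolve_left h2
      rw [hcβ]
      exact iff_of_false (fun hh => hδα hh.symm) (fun hh => hδβ hh.symm)
    · rfl
  simp only [missing_def]
  constructor
  · rintro ⟨h1, h2, h3⟩
    exact ⟨h1, h2, fun g hg hv hh => h3 g hg hv ((key g).mpr hh)⟩
  · rintro ⟨h1, h2, h3⟩
    exact ⟨h1, h2, fun g hg hv hh => h3 g hg hv ((key g).mp hh)⟩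

lemma swap_missing_endpoint (hab : α ≠ β) {v : V} (hvC : v ∈ C)
    (hmiss : ∀ g ∈ K.edgeSet, v ∈ g → c g ≠ α) (hβ1 : 1 ≤ β) (hβ2 : β ≤ k) :
    β ∈ missingColors K k (swapColor c α β C) v := by
  refine ⟨hβ1, hβ2, ?_⟩
  intro g hg hv
  unfold swapColor
  split_ifs with h h2
  · exact fun _ => hmiss g hg hv h2
  · exact fun hh => hab hh
  · intro hh
    exact h ⟨Or.inr hh, v, hv, hvC⟩

lemma swap_proper (hcol : IsEdgeColoring K k c) (hC : ChainClosed K c α β C)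
    (hab : α ≠ β) (hα1 : 1 ≤ α) (hα2 : α ≤ k) (hβ1 : 1 ≤ β) (hβ2 : β ≤ k) :
    IsEdgeColoring K k (swapColor c α β C) := by
  constructor
  · intro g hg
    unfold swapColor
    split_ifs with h h2
    · exact ⟨hβ1, hβ2⟩
    · exact ⟨hα1, hα2⟩
    · exact hcol.1 g hg
  · rintro g1 hg1 g2 hg2 hne ⟨v, hv1, hv2⟩
    have base := hcol.2 g1 hg1 g2 hg2 hne ⟨v, hv1, hv2⟩
    by_cases h1 : (c g1 = α ∨ c g1 = β) ∧ (∃ w ∈ g1, w ∈ C) <;>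
      by_cases h2 : (c g2 = α ∨ c g2 = β) ∧ (∃ w ∈ g2, w ∈ C)
    · unfold swapColor
      rw [if_pos h1, if_pos h2]
      rcases h1.1 with ha1 | hb1 <;> rcases h2.1 with ha2 | hb2
      · exact absurd (ha1.trans ha2.symm) base
      · rw [if_pos ha1, if_neg (fun h : c g2 = α => hab (h.symm.trans hb2))]
        exact fun hh => hab hh.symm
      · rw [if_neg (fun h : c g1 = α => hab (h.symm.trans hb1)), if_pos ha2]
        exact hab
      · exact absurd (hb1.trans hb2.symm) base
    · have hvC : v ∈ C := swap_closed hC hg1 h1.1 h1.2 v hv1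
      unfold swapColor
      rw [if_pos h1, if_neg h2]
      intro hh
      apply h2
      refine ⟨?_, v, hv2, hvC⟩
      split_ifs at hh with h3
      · exact Or.inr hh.symm
      · exact Or.inl hh.symm
    · have hvC : v ∈ C := swap_closed hC hg2 h2.1 h2.2 v hv2
      unfold swapColor
      rw [if_neg h1, if_pos h2]
      intro hh
      apply h1
      refine ⟨?_, v, hv1, hvC⟩
      split_ifs at hh with h3
      · exact Or.inr hh
      · exact Or.inl hh
    · unfold swapColor
      rw [if_neg h1, if_neg h2]
      exact base

end Swap


/-! ### Kempe chains are paths: key structural lemmas -/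

section Chains

variable {K : SimpleGraph V} {k : ℕ} {c : Sym2 V → ℕ} {α β : ℕ}

lemma chain_edge_mem {x y : V} (h : (chainGraph K c α β).Adj x y) :
    s(x,y) ∈ K.edgeSet := (mem_edgeSet K).2 h.1

lemma deg_le_one (hcol : IsEdgeColoring K k c) {w : V} {cm : ℕ} (hcm : cm = α ∨ cm = β)
    (hmiss : ∀ g ∈ K.edgeSet, w ∈ g → c g ≠ cm) {x y : V}
    (hx : (chainGraph K c α β).Adj w x) (hy : (chainGraph K c α β).Adj w y) : x = y := by
  have hex : s(w,x) ∈ K.edgeSet := chain_edge_mem hx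
  have hey : s(w,y) ∈ K.edgeSet := chain_edge_mem hy
  have hcx : c s(w,x) ≠ cm := hmiss _ hex (by simp)
  have hcy : c s(w,y) ≠ cm := hmiss _ hey (by simp)
  have heqc : c s(w,x) = c s(w,y) := by
    rcases hcm with rfl | rfl
    · rw [hx.2.resolve_left hcx, hy.2.resolve_left hcy]
    · rw [hx.2.resolve_right hcx, hy.2.resolve_right hcy]
  by_contra hne
  have hEne : s(w,x) ≠ s(w,y) := fun h => hne (Sym2.congr_right.mp h)
  exact hcol.2 _ hex _ hey hEne ⟨w, by simp, by simp⟩ heqc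

lemma force (hcol : IsEdgeColoring K k c) {a x : V} (P : (chainGraph K c α β).Walk a x) :
    ∀ {y : V} (Q : (chainGraph K c α β).Walk a y) (cm : ℕ), P.IsPath → Q.IsPath →
      P.length ≤ Q.length → (cm = α ∨ cm = β) →
      (∀ z, s(a, z) ∈ P.edges → c s(a, z) ≠ cm) →
      (∀ z, s(a, z) ∈ Q.edges → c s(a, z) ≠ cm) →
      x ∈ Q.support := by
  induction P with
  | nil =>
    intro y Q cm _ _ _ _ _ _
    exact Q.start_mem_support
  | @cons a u x h p ih =>
    intro y Q cm hP hQ hlen hcm hPc hQc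
    cases Q with
    | nil => simp at hlen
    | @cons _ v _ h2 q =>
      have hPfirst : c s(a, u) ≠ cm := hPc u (by simp [SimpleGraph.Walk.edges_cons])
      have hQfirst : c s(a, v) ≠ cm := hQc v (by simp [SimpleGraph.Walk.edges_cons])
      have heqc : c s(a,u) = c s(a,v) := by
        rcases hcm with rfl | rfl
        · rw [h.2.resolve_left hPfirst, h2.2.resolve_left hQfirst]
        · rw [h.2.resolve_right hPfirst, h2.2.resolve_right hQfirst]
      have huv : u = v := by
        by_contra hne
        have hEne : s(a,u) ≠ s(a,v) := fun hh => hne (Sym2.congr_right.mp hh)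
        exact hcol.2 _ (chain_edge_mem h) _ (chain_edge_mem h2) hEne ⟨a, by simp, by simp⟩ heqc
      subst huv
      have hPp : p.IsPath := (SimpleGraph.Walk.cons_isPath_iff h p).mp hP |>.1
      have haP : a ∉ p.support := ((SimpleGraph.Walk.cons_isPath_iff h p).mp hP).2
      have hQq : q.IsPath := (SimpleGraph.Walk.cons_isPath_iff h2 q).mp hQ |>.1
      have haQ : a ∉ q.support := ((SimpleGraph.Walk.cons_isPath_iff h2 q).mp hQ).2
      have hau : a ≠ u := h.ne
      have htail : ∀ (b2 : V) (w : (chainGraph K c α β).Walk u b2), a ∉ w.support →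
          ∀ z, s(u, z) ∈ w.edges → c s(u, z) ≠ c s(a, u) := by
        intro b2 w haw z hz heq
        have hzw : z ∈ w.support := w.snd_mem_support_of_mem_edges hz
        have hza : z ≠ a := fun hh => haw (hh ▸ hzw)
        have hEne : s(u,z) ≠ s(a,u) := by
          intro hh
          have : a ∈ s(u,z) := hh ▸ (by simp : a ∈ s(a,u))
          rcases Sym2.mem_iff.mp this with hh2 | hh2
          · exact hau hh2
          · exact hza hh2.symm
        have hadjz : (chainGraph K c α β).Adj u z := w.adj_of_mem_edges hz
        exact hcol.2 _ (chain_edge_mem hadjz) _ (chain_edge_mem h) hEne ⟨u, by simp, by simp⟩ heq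
      have hx : x ∈ q.support := by
        refine ih q (c s(a,u)) hPp hQq ?_ h.2 (htail x p haP) ?_
        · simpa using Nat.succ_le_succ_iff.mp (by simpa using hlen)
        · have := htail y q haQ
          simpa [heqc] using this
      simp only [SimpleGraph.Walk.support_cons]
      exact List.mem_cons_of_mem _ hx

lemma interior (hcol : IsEdgeColoring K k c) {w : V}
    (hdeg : ∀ x y, (chainGraph K c α β).Adj w x → (chainGraph K c α β).Adj w y → x = y) :
    ∀ {a b : V} (Q : (chainGraph K c α β).Walk a b), Q.IsPath → w ∈ Q.support →
      w ≠ a → w ≠ b → False := by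
  intro a b Q
  induction Q with
  | nil =>
    intro _ hw hwa _
    simp only [SimpleGraph.Walk.support_nil, List.mem_singleton] at hw
    exact hwa hw
  | @cons a u b h q ih =>
    intro hQ hw hwa hwb
    have hQq : q.IsPath := ((SimpleGraph.Walk.cons_isPath_iff h q).mp hQ).1
    have haq : a ∉ q.support := ((SimpleGraph.Walk.cons_isPath_iff h q).mp hQ).2
    simp only [SimpleGraph.Walk.support_cons, List.mem_cons] at hw
    rcases hw with rfl | hw
    · exact hwa rfl
    · by_cases hwu : w = u
      · subst hwu
        cases q with
        | nil => exact hwb rfl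
        | @cons _ z _ h2 q2 =>
          have haz : a = z := hdeg a z h.symm h2
          apply haq
          rw [haz]
          simp [SimpleGraph.Walk.support_cons]
      · exact ih hQq hw hwu hwb

lemma not_both_reachable (hcol : IsEdgeColoring K k c) {r si sp : V}
    (hr : ∀ g ∈ K.edgeSet, r ∈ g → c g ≠ β)
    (hi : ∀ g ∈ K.edgeSet, si ∈ g → c g ≠ α)
    (hp : ∀ g ∈ K.edgeSet, sp ∈ g → c g ≠ α)
    (hri : r ≠ si) (hrp : r ≠ sp) (hip : si ≠ sp)
    (h1 : (chainGraph K c α β).Reachable r si)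
    (h2 : (chainGraph K c α β).Reachable r sp) : False := by
  have hedge : ∀ {aa bb : V} (w : (chainGraph K c α β).Walk aa bb),
      ∀ z, s(r, z) ∈ w.edges → c s(r, z) ≠ β := by
    intro aa bb w z hz
    exact hr _ (chain_edge_mem (w.adj_of_mem_edges hz)) (by simp)
  refine h1.elim fun w1 => h2.elim fun w2 => ?_
  have hp1 := w1.bypass_isPath
  have hp2 := w2.bypass_isPath
  rcases le_total w1.bypass.length w2.bypass.length with hle | hle
  · have hmem : si ∈ w2.bypass.support :=
      force hcol w1.bypass w2.bypass β hp1 hp2 hle (Or.inr rfl)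
        (hedge w1.bypass) (hedge w2.bypass)
    exact interior hcol (fun x y hx hy => deg_le_one hcol (Or.inl rfl) hi hx hy)
      w2.bypass hp2 hmem hri.symm hip
  · have hmem : sp ∈ w1.bypass.support :=
      force hcol w2.bypass w1.bypass β hp2 hp1 hle (Or.inr rfl)
        (hedge w2.bypass) (hedge w1.bypass)
    exact interior hcol (fun x y hx hy => deg_le_one hcol (Or.inl rfl) hp hx hy)
      w1.bypass hp1 hmem hrp.symm hip.symm

end Chains

/-! ### Existence of a missing color at the center -/

lemma exists_missing [Fintype V] {G : SimpleGraph V} [DecidableRel G.Adj] {Δ : ℕ}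
    (hΔ : G.maxDegree = Δ) {r s₁ : V} (hadj : G.Adj r s₁) {φ : Sym2 V → ℕ}
    (hcol : IsEdgeColoring (G.deleteEdges {s(r,s₁)}) Δ φ) :
    ∃ β, β ∈ missingColors (G.deleteEdges {s(r,s₁)}) Δ φ r := by
  classical
  have hdegle : G.degree r ≤ Δ := hΔ ▸ G.degree_le_maxDegree r
  set G' := G.deleteEdges {s(r,s₁)} with hG'
  haveI : DecidableRel G'.Adj := fun a b =>
    decidable_of_iff (G.Adj a b ∧ ¬ s(a,b) = s(r,s₁))
      (by rw [hG', deleteEdges_adj]; simp)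
  set S : Finset ℕ := (G'.neighborFinset r).image (fun u => φ s(r,u)) with hS
  have hsub : G'.neighborFinset r ⊆ G.neighborFinset r := by
    intro u hu
    rw [mem_neighborFinset] at hu ⊢
    exact hu.1
  have hs1 : s₁ ∈ G.neighborFinset r := by rw [mem_neighborFinset]; exact hadj
  have hs1' : s₁ ∉ G'.neighborFinset r := by
    rw [mem_neighborFinset, hG', deleteEdges_adj]
    intro hu
    exact hu.2 rfl
  have hlt : G'.degree r < G.degree r :=
    Finset.card_lt_card ⟨hsub, fun hts => hs1' (hts hs1)⟩
  have hSle : S.card ≤ G'.degree r := Finset.card_image_le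
  have hcard : S.card < Δ := by
    have e1 : G'.degree r = (G'.neighborFinset r).card := rfl
    have e2 : G.degree r = (G.neighborFinset r).card := rfl
    omega
  by_contra hnone
  push_neg at hnone
  have hIcc : Finset.Icc 1 Δ ⊆ S := by
    intro β hβ
    rw [Finset.mem_Icc] at hβ
    by_contra hβS
    refine hnone β ⟨hβ.1, hβ.2, ?_⟩
    intro g hg hrg
    revert hg hrg
    induction g using Sym2.ind with
    | _ x y =>
      intro hg hrg
      rcases Sym2.mem_iff.mp hrg with rfl | rfl
      · intro hEq
        refine hβS (Finset.mem_image.mpr ⟨y, ?_, hEq⟩)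
        rw [mem_neighborFinset]
        exact (mem_edgeSet G').1 hg
      · rw [Sym2.eq_swap]
        intro hEq
        refine hβS (Finset.mem_image.mpr ⟨x, ?_, hEq⟩)
        rw [mem_neighborFinset]
        exact ((mem_edgeSet G').1 hg).symm
  have hfin := Finset.card_le_card hIcc
  rw [Nat.card_Icc] at hfin
  omega

lemma head?_take {γ : Type*} {l : List γ} {m : ℕ} (h : 1 ≤ m) :
    (l.take m).head? = l.head? := by
  cases l <;> cases m <;> simp_all

lemma multifan_take {G : SimpleGraph V} {k : ℕ} {c : Sym2 V → ℕ} {r : V} {sl : List V}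
    (h : IsMultifan G k c r sl) {m : ℕ} (h1 : 1 ≤ m) (h2 : m ≤ sl.length) :
    IsMultifan G k c r (sl.take m) := by
  have hlen : (sl.take m).length = m := by simp [List.length_take]; omega
  refine ⟨?_, ?_, ?_, ?_⟩
  · rw [hlen]; exact h1
  · exact List.Nodup.sublist (List.Sublist.cons₂ r (List.take_sublist _ sl)) h.nodup
  · intro i hi
    simp only [List.getElem_take]
    exact h.adj i (by rw [hlen] at hi; omega)
  · intro i hi h1i
    have hi' : i < sl.length := by rw [hlen] at hi; omega
    obtain ⟨j, hj, hw⟩ := h.color i hi' h1i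
    refine ⟨j, hj, ?_⟩
    simp only [List.getElem_take]
    exact hw

/-! ### The main induction -/

lemma key [Fintype V] {G : SimpleGraph V} [DecidableRel G.Adj] {Δ : ℕ}
    (hΔ : G.maxDegree = Δ) (hclass2 : chromIndex G = Δ + 1) (r s₁ : V) (n : ℕ) :
    ∀ (φ : Sym2 V → ℕ) (sl : List V), sl.length = n → sl.head? = some s₁ →
      IsEdgeColoring (G.deleteEdges {s(r, s₁)}) Δ φ → IsMultifan G Δ φ r sl →
      ∀ x ∈ (r :: sl), ∀ y ∈ (r :: sl), x ≠ y →
        missingColors (G.deleteEdges {s(r, s₁)}) Δ φ x ∩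
          missingColors (G.deleteEdges {s(r, s₁)}) Δ φ y = ∅ := by
  induction n using Nat.strong_induction_on with
  | _ n IH =>
  intro φ sl hn hhead hcol hmf x hx y hy hxy
  by_contra hne
  rw [← ne_eq, ← Set.nonempty_iff_ne_empty] at hne
  obtain ⟨γ0, hγx, hγy⟩ := hne
  set G' := G.deleteEdges {s(r, s₁)} with hG'def
  have hpos : 0 < sl.length := hmf.one_le
  have hnpos : 0 < n := hn ▸ hpos
  have h0 : sl[0]'hpos = s₁ := by
    cases sl with
    | nil => simp at hpos
    | cons a tl => simpa using hhead
  have hrsl : r ∉ sl := (List.nodup_cons.mp hmf.nodup).1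
  have hsnd : sl.Nodup := (List.nodup_cons.mp hmf.nodup).2
  have hgetne : ∀ i j (hi : i < sl.length) (hj : j < sl.length), i ≠ j →
      sl[i] ≠ sl[j] :=
    fun i j hi hj hij hEq => hij (hsnd.getElem_inj_iff.mp hEq)
  have hrget : ∀ i (hi : i < sl.length), r ≠ sl[i] :=
    fun i hi hEq => hrsl (hEq ▸ List.getElem_mem hi)
  have hadjget : ∀ i (hi : i < sl.length), G.Adj r (sl[i]) := hmf.adj
  have hEget : ∀ i (hi : i < sl.length), s(r, sl[i]) ∈ G.edgeSet :=
    fun i hi => (mem_edgeSet G).2 (hadjget i hi)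
  have hE'get : ∀ i (hi : i < sl.length), 1 ≤ i → s(r, sl[i]) ∈ G'.edgeSet := by
    intro i hi h1i
    rw [hG'def, edgeSet_deleteEdges]
    refine ⟨hEget i hi, ?_⟩
    simp only [Set.mem_singleton_iff]
    intro hEq
    have hii : sl[i] = sl[0]'hpos := Sym2.congr_right.mp (by rw [h0]; exact hEq)
    exact hgetne i 0 hi hpos (by omega) hii
  have hadj1 : G.Adj r s₁ := h0 ▸ hadjget 0 hpos
  have hE1 : s(r, s₁) ∈ G.edgeSet := (mem_edgeSet G).2 hadj1
  -- reduce to a violation inside a shorter multifan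
  have prefixContra : ∀ (ψ : Sym2 V → ℕ), IsEdgeColoring G' Δ ψ → ∀ (mm : ℕ), 1 ≤ mm →
      mm < n → IsMultifan G Δ ψ r (sl.take mm) → ∀ u ∈ r :: sl.take mm,
      ∀ w ∈ r :: sl.take mm, u ≠ w →
      (missingColors G' Δ ψ u ∩ missingColors G' Δ ψ w).Nonempty → False := by
    intro ψ hψ mm hm1 hm2 hmfp u hu w hw huw hne2
    have hempty := IH mm hm2 ψ (sl.take mm) (by simp [List.length_take]; omega)
      (by rw [head?_take hm1]; exact hhead) hψ hmfp u hu w hw huw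
    rw [hempty] at hne2
    exact Set.not_nonempty_empty hne2
  -- extend the coloring through the uncolored edge
  have baseContra : ∀ (ψ : Sym2 V → ℕ), IsEdgeColoring G' Δ ψ →
      ∀ δ, δ ∈ missingColors G' Δ ψ r → δ ∈ missingColors G' Δ ψ s₁ → False := by
    intro ψ hψ δ hδr hδs
    have hext : IsEdgeColoring G Δ (recolor ψ (s(r,s₁)) δ) := by
      refine recolor_proper_del hE1 hψ hδr.1 hδr.2.1 ?_
      intro w hw g hg hwg
      rcases Sym2.mem_iff.mp hw with rfl | rfl
      · exact hδr.2.2 g hg hwg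
      · exact hδs.2.2 g hg hwg
    have hle : chromIndex G ≤ Δ := Nat.sInf_le ⟨_, hext⟩
    omega
  -- Vizing's recoloring of the last fan edge
  have case1Contra : ∀ (ψ : Sym2 V → ℕ), IsEdgeColoring G' Δ ψ → IsMultifan G Δ ψ r sl →
      2 ≤ n → ∀ δ, δ ∈ missingColors G' Δ ψ r →
      δ ∈ missingColors G' Δ ψ (sl[n-1]'(by omega)) → False := by
    intro ψ hψ hmfψ hn2 δ hδr hδp
    have hplt : n - 1 < sl.length := by omega
    have hfE : s(r, sl[n-1]'hplt) ∈ G'.edgeSet := hE'get (n-1) hplt (by omega)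
    obtain ⟨j, hj, hwit⟩ := hmfψ.color (n-1) hplt (by omega)
    rw [h0, ← hG'def] at hwit
    have hjlt : j < sl.length := by omega
    have hψ' : IsEdgeColoring G' Δ (recolor ψ (s(r, sl[n-1]'hplt)) δ) := by
      refine recolor_proper hψ hfE hδr.1 hδr.2.1 ?_
      intro w hw g hg hwg
      rcases Sym2.mem_iff.mp hw with rfl | rfl
      · exact hδr.2.2 g hg hwg
      · exact hδp.2.2 g hg hwg
    have hmf' : IsMultifan G Δ (recolor ψ (s(r, sl[n-1]'hplt)) δ) r (sl.take (n-1)) := by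
      refine ⟨?_, ?_, ?_, ?_⟩
      · simp [List.length_take]; omega
      · exact List.Nodup.sublist (List.Sublist.cons₂ r (List.take_sublist _ sl)) hmfψ.nodup
      · intro i hi
        simp only [List.getElem_take]
        exact hmfψ.adj i (by simp [List.length_take] at hi; omega)
      · intro i hi h1i
        have hi' : i < sl.length := by simp [List.length_take] at hi; omega
        have hi'' : i < n - 1 := by simp [List.length_take] at hi; omega
        obtain ⟨j', hj', hw'⟩ := hmfψ.color i hi' h1i
        refine ⟨j', hj', ?_⟩
        simp only [List.getElem_take]
        have hne1 : s(r, sl[i]) ≠ s(r, sl[n-1]'hplt) := by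
          intro hEq
          exact hgetne i (n-1) hi' hplt (by omega) (Sym2.congr_right.mp hEq)
        have hnotin : (sl[j']'(by omega)) ∉ s(r, sl[n-1]'hplt) := by
          intro hmem
          rcases Sym2.mem_iff.mp hmem with hEq | hEq
          · exact hrget j' (by omega) hEq.symm
          · exact hgetne j' (n-1) (by omega) hplt (by omega) hEq
        rw [recolor_ne hne1, recolor_missing_other hnotin]
        exact hw'
    have hγr : ψ (s(r, sl[n-1]'hplt)) ∈
        missingColors G' Δ (recolor ψ (s(r, sl[n-1]'hplt)) δ) r :=
      recolor_old_missing hψ hfE (by simp) hδr.2.2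
    have hγj : ψ (s(r, sl[n-1]'hplt)) ∈
        missingColors G' Δ (recolor ψ (s(r, sl[n-1]'hplt)) δ) (sl[j]'hjlt) := by
      have hnotin : (sl[j]'hjlt) ∉ s(r, sl[n-1]'hplt) := by
        intro hmem
        rcases Sym2.mem_iff.mp hmem with hEq | hEq
        · exact hrget j hjlt hEq.symm
        · exact hgetne j (n-1) hjlt hplt (by omega) hEq
      rw [recolor_missing_other hnotin]
      exact hwit
    have hmemj : (sl[j]'hjlt) ∈ r :: sl.take (n-1) := by
      refine List.mem_cons_of_mem _ (List.mem_iff_getElem.mpr ⟨j, ?_, ?_⟩)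
      · simp [List.length_take]; omega
      · simp [List.getElem_take]
    exact prefixContra (recolor ψ (s(r, sl[n-1]'hplt)) δ) hψ' (n-1) (by omega) (by omega)
      hmf' r List.mem_cons_self (sl[j]'hjlt) hmemj (hrget j hjlt)
      ⟨ψ (s(r, sl[n-1]'hplt)), hγr, hγj⟩
  -- the Kempe chain argument
  have main2 : ∀ (i : ℕ) (hi : i < sl.length), i < n - 1 → 2 ≤ n →
      γ0 ∈ missingColors G' Δ φ (sl[i]) →
      γ0 ∈ missingColors G' Δ φ (sl[n-1]'(by omega)) → False := by
    intro i hi hilt hn2 hγi hγp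
    have hplt : n - 1 < sl.length := by omega
    have hdisjrp : ∀ δ, δ ∈ missingColors G' Δ φ r →
        δ ∈ missingColors G' Δ φ (sl[n-1]'hplt) → False :=
      fun δ h1 h2 => case1Contra φ hcol hmf hn2 δ h1 h2
    obtain ⟨β, hβr⟩ := exists_missing hΔ hadj1 hcol
    rw [← hG'def] at hβr
    have hα_nr : γ0 ∉ missingColors G' Δ φ r := fun h => hdisjrp γ0 h hγp
    have hab : γ0 ≠ β := fun h => hα_nr (h ▸ hβr)
    have hwitα : ∀ (j : ℕ) (hj : j < sl.length), j < n - 1 → j ≠ i →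
        γ0 ∈ missingColors G' Δ φ (sl[j]) → False := by
      intro j hj hjlt hji hγj
      have hmemj : (sl[j]'hj) ∈ r :: sl.take (n-1) := by
        refine List.mem_cons_of_mem _ (List.mem_iff_getElem.mpr ⟨j, ?_, ?_⟩)
        · simp [List.length_take]; omega
        · simp [List.getElem_take]
      have hmemi : (sl[i]'hi) ∈ r :: sl.take (n-1) := by
        refine List.mem_cons_of_mem _ (List.mem_iff_getElem.mpr ⟨i, ?_, ?_⟩)
        · simp [List.length_take]; omega
        · simp [List.getElem_take]
      exact prefixContra φ hcol (n-1) (by omega) (by omega)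
        (multifan_take hmf (by omega) (by omega)) (sl[j]) hmemj (sl[i]) hmemi
        (hgetne j i hj hi hji) ⟨γ0, hγj, hγi⟩
    have hne_ri : r ≠ sl[i] := hrget i hi
    have hne_rp : r ≠ sl[n-1]'hplt := hrget (n-1) hplt
    have hne_ip : sl[i] ≠ sl[n-1]'hplt := hgetne i (n-1) hi hplt (by omega)
    have prefI : ∀ (C : Set V), ChainClosed G' φ γ0 β C → r ∉ C → sl[i] ∈ C → False := by
      intro C hCc hrC hiC
      have hψ : IsEdgeColoring G' Δ (swapColor φ γ0 β C) :=
        swap_proper hcol hCc hab hγi.1 hγi.2.1 hβr.1 hβr.2.1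
      have hmr : missingColors G' Δ (swapColor φ γ0 β C) r = missingColors G' Δ φ r :=
        swap_missing_eq hCc hrC
      have hmi : β ∈ missingColors G' Δ (swapColor φ γ0 β C) (sl[i]) :=
        swap_missing_endpoint hab hiC hγi.2.2 hβr.1 hβr.2.1
      have hmfp : IsMultifan G Δ (swapColor φ γ0 β C) r (sl.take (i+1)) := by
        refine ⟨?_, ?_, ?_, ?_⟩
        · simp [List.length_take]; omega
        · exact List.Nodup.sublist (List.Sublist.cons₂ r (List.take_sublist _ sl)) hmf.nodup
        · intro l hl
          simp only [List.getElem_take]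
          exact hmf.adj l (by simp [List.length_take] at hl; omega)
        · intro l hl h1l
          have hl' : l < sl.length := by simp [List.length_take] at hl; omega
          have hlle : l ≤ i := by simp [List.length_take] at hl; omega
          obtain ⟨j, hj, hw⟩ := hmf.color l hl' h1l
          rw [h0, ← hG'def] at hw
          have hjl : j < sl.length := by omega
          have hedgeE : s(r, sl[l]) ∈ G'.edgeSet := hE'get l hl' h1l
          have hδβ : φ (s(r, sl[l])) ≠ β := fun hEq => hβr.2.2 _ hedgeE (by simp) hEq
          have hδα : φ (s(r, sl[l])) ≠ γ0 := by
            intro hEq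
            exact hwitα j hjl (by omega) (by omega) (hEq ▸ hw)
          refine ⟨j, hj, ?_⟩
          simp only [List.getElem_take]
          rw [h0, ← hG'def]
          have hedge_eq : swapColor φ γ0 β C (s(r, sl[l])) = φ (s(r, sl[l])) :=
            swap_eq_of_notMem hCc hedgeE (by simp) hrC
          rw [hedge_eq]
          exact (swap_missing_other hδα hδβ _).mpr hw
      have hmemi : (sl[i]'hi) ∈ r :: sl.take (i+1) := by
        refine List.mem_cons_of_mem _ (List.mem_iff_getElem.mpr ⟨i, ?_, ?_⟩)
        · simp [List.length_take]; omega
        · simp [List.getElem_take]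
      exact prefixContra (swapColor φ γ0 β C) hψ (i+1) (by omega) (by omega) hmfp
        r List.mem_cons_self (sl[i]) hmemi hne_ri ⟨β, hmr ▸ hβr, hmi⟩
    by_cases hRp : (chainGraph G' φ γ0 β).Reachable r (sl[n-1]'hplt)
    · have hRi : ¬ (chainGraph G' φ γ0 β).Reachable r (sl[i]) := by
        intro hRi
        exact not_both_reachable hcol hβr.2.2 hγi.2.2 hγp.2.2 hne_ri hne_rp hne_ip hRi hRp
      have hCc : ChainClosed G' φ γ0 β {v | (chainGraph G' φ γ0 β).Reachable (sl[i]) v} :=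
        fun u w hu ha hcφ => hu.trans (SimpleGraph.Adj.reachable ⟨ha, hcφ⟩)
      have hrC : r ∉ {v | (chainGraph G' φ γ0 β).Reachable (sl[i]) v} :=
        fun h => hRi (SimpleGraph.Reachable.symm h)
      exact prefI _ hCc hrC (SimpleGraph.Reachable.refl _)
    · by_cases hiC : sl[i] ∈ {v | (chainGraph G' φ γ0 β).Reachable (sl[n-1]'hplt) v}
      · have hCc : ChainClosed G' φ γ0 β
            {v | (chainGraph G' φ γ0 β).Reachable (sl[n-1]'hplt) v} :=
          fun u w hu ha hcφ => hu.trans (SimpleGraph.Adj.reachable ⟨ha, hcφ⟩)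
        have hrC : r ∉ {v | (chainGraph G' φ γ0 β).Reachable (sl[n-1]'hplt) v} :=
          fun h => hRp (SimpleGraph.Reachable.symm h)
        exact prefI _ hCc hrC hiC
      · set C : Set V := {v | (chainGraph G' φ γ0 β).Reachable (sl[n-1]'hplt) v} with hCdef
        have hCc : ChainClosed G' φ γ0 β C :=
          fun u w hu ha hcφ => hu.trans (SimpleGraph.Adj.reachable ⟨ha, hcφ⟩)
        have hrC : r ∉ C := fun h => hRp (SimpleGraph.Reachable.symm h)
        have hψ : IsEdgeColoring G' Δ (swapColor φ γ0 β C) :=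
          swap_proper hcol hCc hab hγi.1 hγi.2.1 hβr.1 hβr.2.1
        have hmfψ : IsMultifan G Δ (swapColor φ γ0 β C) r sl := by
          refine ⟨hmf.one_le, hmf.nodup, hmf.adj, ?_⟩
          intro l hl h1l
          obtain ⟨j, hj, hw⟩ := hmf.color l hl h1l
          rw [h0, ← hG'def] at hw
          have hjl : j < sl.length := by omega
          have hedgeE : s(r, sl[l]) ∈ G'.edgeSet := hE'get l hl h1l
          have hδβ : φ (s(r, sl[l])) ≠ β := fun hEq => hβr.2.2 _ hedgeE (by simp) hEq
          have hedge_eq : swapColor φ γ0 β C (s(r, sl[l])) = φ (s(r, sl[l])) :=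
            swap_eq_of_notMem hCc hedgeE (by simp) hrC
          refine ⟨j, hj, ?_⟩
          rw [h0, ← hG'def, hedge_eq]
          by_cases hδα : φ (s(r, sl[l])) = γ0
          · have hji : j = i := by
              by_contra hji
              exact hwitα j hjl (by omega) hji (hδα ▸ hw)
            subst hji
            rw [swap_missing_eq hCc hiC]
            exact hw
          · exact (swap_missing_other hδα hδβ _).mpr hw
        have hmrψ : β ∈ missingColors G' Δ (swapColor φ γ0 β C) r := by
          rw [swap_missing_eq hCc hrC]
          exact hβr
        have hmpψ : β ∈ missingColors G' Δ (swapColor φ γ0 β C) (sl[n-1]'hplt) :=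
          swap_missing_endpoint hab (SimpleGraph.Reachable.refl _) hγp.2.2 hβr.1 hβr.2.1
        exact case1Contra (swapColor φ γ0 β C) hψ hmfψ hn2 β hmrψ hmpψ
  -- violation between r and a fan vertex
  have rviol : ∀ (i : ℕ) (hi : i < sl.length), γ0 ∈ missingColors G' Δ φ r →
      γ0 ∈ missingColors G' Δ φ (sl[i]) → False := by
    intro i hi hγr hγi
    by_cases hn1 : n = 1
    · have hi0 : i = 0 := by omega
      subst hi0
      exact baseContra φ hcol γ0 hγr (h0 ▸ hγi)
    · have hn2 : 2 ≤ n := by omega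
      by_cases hip : i = n - 1
      · subst hip
        exact case1Contra φ hcol hmf hn2 γ0 hγr hγi
      · have hmemi : (sl[i]'hi) ∈ r :: sl.take (n-1) := by
          refine List.mem_cons_of_mem _ (List.mem_iff_getElem.mpr ⟨i, ?_, ?_⟩)
          · simp [List.length_take]; omega
          · simp [List.getElem_take]
        exact prefixContra φ hcol (n-1) (by omega) (by omega)
          (multifan_take hmf (by omega) (by omega)) r List.mem_cons_self
          (sl[i]) hmemi (hrget i hi) ⟨γ0, hγr, hγi⟩
  -- violation between two fan vertices
  have ijviol : ∀ (i j : ℕ) (hi : i < sl.length) (hj : j < sl.length), i < j →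
      γ0 ∈ missingColors G' Δ φ (sl[i]) → γ0 ∈ missingColors G' Δ φ (sl[j]) → False := by
    intro i j hi hj hij hγi hγj
    by_cases hjp : j = n - 1
    · subst hjp
      exact main2 i hi (by omega) (by omega) hγi hγj
    · have hmemi : (sl[i]'hi) ∈ r :: sl.take (n-1) := by
        refine List.mem_cons_of_mem _ (List.mem_iff_getElem.mpr ⟨i, ?_, ?_⟩)
        · simp [List.length_take]; omega
        · simp [List.getElem_take]
      have hmemj : (sl[j]'hj) ∈ r :: sl.take (n-1) := by
        refine List.mem_cons_of_mem _ (List.mem_iff_getElem.mpr ⟨j, ?_, ?_⟩)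
        · simp [List.length_take]; omega
        · simp [List.getElem_take]
      exact prefixContra φ hcol (n-1) (by omega) (by omega)
        (multifan_take hmf (by omega) (by omega)) (sl[i]) hmemi (sl[j]) hmemj
        (hgetne i j hi hj (by omega)) ⟨γ0, hγi, hγj⟩
  rcases List.mem_cons.mp hx with rfl | hx'
  · rcases List.mem_cons.mp hy with rfl | hy'
    · exact hxy rfl
    · obtain ⟨i, hi, rfl⟩ := List.mem_iff_getElem.mp hy'
      exact rviol i hi hγx hγy
  · obtain ⟨i, hi, rfl⟩ := List.mem_iff_getElem.mp hx'
    rcases List.mem_cons.mp hy with rfl | hy'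
    · exact rviol i hi hγy hγx
    · obtain ⟨j, hj, rfl⟩ := List.mem_iff_getElem.mp hy'
      have hij : i ≠ j := fun h => hxy (by subst h; rfl)
      rcases Nat.lt_or_ge i j with hlt | hge
      · exact ijviol i j hi hj hlt hγx hγy
      · have hlt : j < i := by omega
        exact ijviol j i hj hi hlt hγy hγx

end MFElem


/-- Let `G` be a Class 2 graph with maximum degree `Δ` and let
`F = F_φ(r, s₁ : s_p)` be a multifan with respect to a critical edge `e = r s₁` and a
coloring `φ ∈ C^Δ(G - e)`. Then `V(F)` is `φ`-elementary: the missing color sets of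
distinct vertices of `F` are disjoint. -/
theorem multifan_elementary
    {V : Type*} [Fintype V] [DecidableEq V]
    (Δ : ℕ) (G : SimpleGraph V) [DecidableRel G.Adj]
    (hΔ : G.maxDegree = Δ) (hclass2 : chromIndex G = Δ + 1)
    (r s₁ : V) (rest : List V)
    (hcrit : IsCriticalEdge G (Sym2.mk r s₁))
    (φ : Sym2 V → ℕ)
    (hφ : IsEdgeColoring (G.deleteEdges {Sym2.mk r s₁}) Δ φ)
    (hF : IsMultifan G Δ φ r (s₁ :: rest)) :
    ∀ x ∈ (r :: s₁ :: rest : List V), ∀ y ∈ (r :: s₁ :: rest : List V), x ≠ y →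
      missingColors (G.deleteEdges {Sym2.mk r s₁}) Δ φ x ∩
        missingColors (G.deleteEdges {Sym2.mk r s₁}) Δ φ y = ∅ := by
  intro x hx y hy hxy
  exact MFElem.key hΔ hclass2 r s₁ (s₁ :: rest).length φ (s₁ :: rest) rfl rfl hφ hF x hx y hy hxy
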